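/- arXiv:2603.25280 — 4 statements merged into one kernel-verified Lean document; each statement's English description precedes it below -/
import Mathlib

section
/- For a Gaussian density f of N(μ, Σ) on ℝ^d with Σ ≻ 0 and p = d/(d+2), the Zador functional (∫ f(x)^p dx)^{(d+2)/d} equals 2π · det(Σ)^{1/d} · ((d+2)/d)^{(d+2)/2}. -/
open MeasureTheory Real Matrix
open scoped MatrixOrder

private lemma gauss_std (d : ℕ) (b : ℝ) (hb : 0 < b) :
    ∫ y : Fin d → ℝ, Real.exp (-b * (y ⬝ᵥ y)) = (π / b) ^ ((d : ℝ) / 2) := by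
  have e := (EuclideanSpace.volume_preserving_symm_measurableEquiv_toLp (Fin d)).symm
  have h1 : ∀ y : Fin d → ℝ, Real.exp (-b * (y ⬝ᵥ y)) =
      Real.exp (-b * ‖(MeasurableEquiv.toLp 2 (Fin d → ℝ)).symm.symm y‖ ^ 2) := by
    intro y
    congr 2
    rw [EuclideanSpace.norm_eq]
    rw [Real.sq_sqrt (by positivity)]
    simp [dotProduct, sq]
  simp_rw [h1]
  rw [e.integral_comp (MeasurableEquiv.measurableEmbedding _)
    (fun v : EuclideanSpace ℝ (Fin d) => Real.exp (-b * ‖v‖ ^ 2))]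
  rw [GaussianFourier.integral_rexp_neg_mul_sq_norm hb]
  simp

private lemma gauss_cov (d : ℕ) (S : Matrix (Fin d) (Fin d) ℝ) (hS : S.PosDef) (b : ℝ) :
    ∫ x : Fin d → ℝ, Real.exp (-b * (x ⬝ᵥ S⁻¹.mulVec x)) =
      |(CFC.sqrt S).det| * ∫ y : Fin d → ℝ, Real.exp (-b * (y ⬝ᵥ y)) := by
  set A := CFC.sqrt S with hA
  have hAA : A * A = S := CFC.sqrt_mul_sqrt_self S hS.posSemidef.nonneg
  have hAt : Aᵀ = A := by
    have h := (CFC.sqrt_nonneg S).posSemidef.isHermitian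
    exact (Matrix.conjTranspose_eq_transpose_of_trivial A).symm.trans h
  have hdS : (0:ℝ) < S.det := hS.det_pos
  have hdA : A.det ≠ 0 := by
    intro h
    rw [← hAA, Matrix.det_mul, h, mul_zero] at hdS
    exact lt_irrefl _ hdS
  have hquad : ∀ y : Fin d → ℝ, (A *ᵥ y) ⬝ᵥ S⁻¹ *ᵥ (A *ᵥ y) = y ⬝ᵥ y := by
    intro y
    have hu : IsUnit A.det := isUnit_iff_ne_zero.mpr hdA
    have hM : A * (S⁻¹ * A) = 1 := by
      rw [← hAA, Matrix.mul_inv_rev]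
      have h1 : A⁻¹ * A = 1 := Matrix.nonsing_inv_mul A hu
      have h2 : A * A⁻¹ = 1 := Matrix.mul_nonsing_inv A hu
      calc A * (A⁻¹ * A⁻¹ * A) = A * (A⁻¹ * (A⁻¹ * A)) := by rw [mul_assoc]
        _ = A * A⁻¹ := by rw [h1, mul_one]
        _ = 1 := h2
    calc (A *ᵥ y) ⬝ᵥ S⁻¹ *ᵥ (A *ᵥ y)
        = (A *ᵥ y) ⬝ᵥ (S⁻¹ * A) *ᵥ y := by rw [Matrix.mulVec_mulVec]
      _ = (y ᵥ* Aᵀ) ⬝ᵥ (S⁻¹ * A) *ᵥ y := by rw [Matrix.vecMul_transpose]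
      _ = y ⬝ᵥ Aᵀ *ᵥ (S⁻¹ * A) *ᵥ y := by rw [← Matrix.dotProduct_mulVec]
      _ = y ⬝ᵥ y := by rw [hAt, Matrix.mulVec_mulVec, hM, Matrix.one_mulVec]
  have hmap : Measure.map (Matrix.toLin' A) volume
      = ENNReal.ofReal |A.det|⁻¹ • volume := by
    rw [← abs_inv]
    exact Real.map_matrix_volume_pi_eq_smul_volume_pi hdA
  have hg : Continuous fun x : Fin d → ℝ => Real.exp (-b * (x ⬝ᵥ S⁻¹.mulVec x)) := by
    apply Real.continuous_exp.comp
    apply Continuous.mul continuous_const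
    simp only [dotProduct, Matrix.mulVec]
    exact continuous_finset_sum _ fun i _ => ((continuous_apply i).mul
      (continuous_finset_sum _ fun j _ => (continuous_const.mul (continuous_apply j))))
  have hT : Continuous (Matrix.toLin' A) := LinearMap.continuous_on_pi _
  have key : ∫ x : Fin d → ℝ, Real.exp (-b * (x ⬝ᵥ S⁻¹.mulVec x)) ∂(Measure.map (Matrix.toLin' A) volume)
      = ∫ y : Fin d → ℝ, Real.exp (-b * ((Matrix.toLin' A y) ⬝ᵥ S⁻¹.mulVec (Matrix.toLin' A y))) :=
    integral_map hT.aemeasurable hg.aestronglyMeasurable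
  rw [hmap, integral_smul_measure] at key
  have h2 : ∀ y : Fin d → ℝ, Real.exp (-b * ((Matrix.toLin' A y) ⬝ᵥ S⁻¹.mulVec (Matrix.toLin' A y)))
      = Real.exp (-b * (y ⬝ᵥ y)) := by
    intro y
    rw [Matrix.toLin'_apply, hquad]
  simp_rw [h2] at key
  have habs : (0:ℝ) < |A.det| := abs_pos.mpr hdA
  rw [ENNReal.toReal_ofReal (by positivity), smul_eq_mul,
    inv_mul_eq_iff_eq_mul₀ (ne_of_gt habs)] at key
  exact key

/-- For a Gaussian density `f` of `N(μ, Σ)` on `ℝ^d` with `Σ ≻ 0` and `p = d/(d+2)`, the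
Zador functional `(∫ f(x)^p dx)^{(d+2)/d}` equals `2π · det(Σ)^{1/d} · ((d+2)/d)^{(d+2)/2}`. -/
theorem gaussian_zador_functional (d : ℕ) (hd : 1 ≤ d) (μ : Fin d → ℝ)
    (S : Matrix (Fin d) (Fin d) ℝ) (hS : S.PosDef)
    (p : ℝ) (hp : p = (d : ℝ) / ((d : ℝ) + 2))
    (f : (Fin d → ℝ) → ℝ)
    (hf : ∀ x, f x = (2 * π) ^ (-(d : ℝ) / 2) * S.det ^ (-(1 : ℝ) / 2) *
      Real.exp (-(1 / 2) * ((x - μ) ⬝ᵥ S⁻¹.mulVec (x - μ)))) :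
    (∫ x : Fin d → ℝ, f x ^ p) ^ (((d : ℝ) + 2) / d) =
      2 * π * S.det ^ ((1 : ℝ) / d) * (((d : ℝ) + 2) / d) ^ (((d : ℝ) + 2) / 2) := by
  have hd0 : (0:ℝ) < d := by exact_mod_cast Nat.lt_of_lt_of_le Nat.zero_lt_one hd
  have hd2 : (0:ℝ) < (d:ℝ) + 2 := by linarith
  have hp0 : 0 < p := by rw [hp]; positivity
  have hs : (0:ℝ) < S.det := hS.det_pos
  have hpi : (0:ℝ) < 2 * π := by positivity
  set b : ℝ := p / 2 with hb
  have hb0 : 0 < b := by positivity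
  set C : ℝ := (2 * π) ^ (-(d : ℝ) / 2) * S.det ^ (-(1 : ℝ) / 2) with hC
  have hC0 : 0 < C := by
    apply mul_pos <;> exact Real.rpow_pos_of_pos (by positivity) _
  -- rewrite the integrand
  have h1' : ∀ x, f x ^ p
      = C ^ p * Real.exp (-b * ((x - μ) ⬝ᵥ S⁻¹.mulVec (x - μ))) := by
    intro x
    rw [hf x]
    rw [Real.mul_rpow (le_of_lt hC0) (le_of_lt (Real.exp_pos _)), ← Real.exp_mul]
    congr 2
    ring
  -- compute the integral
  have A := CFC.sqrt S
  set a : ℝ := |(CFC.sqrt S).det| with ha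
  have hAA : CFC.sqrt S * CFC.sqrt S = S := CFC.sqrt_mul_sqrt_self S hS.posSemidef.nonneg
  have ha2 : a ^ 2 = S.det := by
    rw [ha, sq_abs, sq, ← Matrix.det_mul, hAA]
  have ha0 : 0 < a := by
    have hne : a ≠ 0 := by
      intro h0
      rw [h0] at ha2
      simp at ha2
      rw [← ha2] at hs
      norm_num at hs
    exact lt_of_le_of_ne (abs_nonneg _) (Ne.symm hne)
  have hint : ∫ x : Fin d → ℝ, f x ^ p = C ^ p * (a * (π / b) ^ ((d : ℝ) / 2)) := by
    simp_rw [h1']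
    rw [integral_const_mul]
    congr 1
    have htrans : ∫ x : Fin d → ℝ, Real.exp (-b * ((x - μ) ⬝ᵥ S⁻¹.mulVec (x - μ)))
        = ∫ x : Fin d → ℝ, Real.exp (-b * (x ⬝ᵥ S⁻¹.mulVec x)) :=
      integral_sub_right_eq_self (fun x : Fin d → ℝ => Real.exp (-b * (x ⬝ᵥ S⁻¹.mulVec x))) μ
    rw [htrans, gauss_cov d S hS b, gauss_std d b hb0]
  rw [hint]
  -- now pure rpow algebra; take logs
  have hπb : π / b > 0 := by positivity
  have hLHS : 0 < C ^ p * (a * (π / b) ^ ((d : ℝ) / 2)) := by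
    apply mul_pos (Real.rpow_pos_of_pos hC0 _)
    exact mul_pos ha0 (Real.rpow_pos_of_pos hπb _)
  have hRHS : 0 < 2 * π * S.det ^ ((1 : ℝ) / d) * (((d : ℝ) + 2) / d) ^ (((d : ℝ) + 2) / 2) := by
    apply mul_pos (mul_pos hpi (Real.rpow_pos_of_pos hs _))
    exact Real.rpow_pos_of_pos (by positivity) _
  rw [← Real.exp_log (Real.rpow_pos_of_pos hLHS (((d : ℝ) + 2) / d)), ← Real.exp_log hRHS]
  congr 1
  rw [Real.log_rpow hLHS]
  rw [Real.log_mul (ne_of_gt (Real.rpow_pos_of_pos hC0 _)) (ne_of_gt (mul_pos ha0 (Real.rpow_pos_of_pos hπb _)))]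
  rw [Real.log_mul (ne_of_gt ha0) (ne_of_gt (Real.rpow_pos_of_pos hπb _))]
  rw [Real.log_rpow hC0, Real.log_rpow hπb]
  rw [Real.log_mul (ne_of_gt (mul_pos hpi (Real.rpow_pos_of_pos hs _))) (ne_of_gt (Real.rpow_pos_of_pos (by positivity) _))]
  rw [Real.log_mul (ne_of_gt hpi) (ne_of_gt (Real.rpow_pos_of_pos hs _))]
  rw [Real.log_rpow hs, Real.log_rpow (by positivity : (0:ℝ) < ((d : ℝ) + 2) / d)]
  rw [hC, Real.log_mul (ne_of_gt (Real.rpow_pos_of_pos hpi _)) (ne_of_gt (Real.rpow_pos_of_pos hs _))]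
  rw [Real.log_rpow hpi, Real.log_rpow hs]
  -- express log a and log (π/b), log ((d+2)/d)
  have hla : Real.log a = Real.log S.det / 2 := by
    rw [← ha2, Real.log_pow]; push_cast; ring
  have hlb : Real.log (π / b) = Real.log (2 * π) - Real.log p := by
    rw [hb]
    rw [show π / (p / 2) = (2 * π) / p by field_simp]
    rw [Real.log_div (ne_of_gt hpi) (ne_of_gt hp0)]
  have hlq : Real.log (((d : ℝ) + 2) / d) = -Real.log p := by
    rw [hp, ← Real.log_inv]
    congr 1
    field_simp
  rw [hla, hlb, hlq, hp]
  field_simp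
  ring
end

section
/- Let W₁, ..., W_k be i.i.d. nonnegative random variables whose common CDF satisfies P(W₁ ≤ a) ≤ C·a^α for all a ∈ [0, a₀], with C > 0 and α > 0. If a* := (1/(C(1+αk)))^{1/α} ≤ a₀, then E[min_{1≤i≤k} W_i] ≥ e^{-1/α} · (1/(C(1+αk)))^{1/α}. -/
open MeasureTheory ProbabilityTheory

lemma aux_exp_le (α : ℝ) (k : ℕ) (hα : 0 < α) (hk : 1 ≤ k) :
    Real.exp (-1 / α) ≤ (α * k / (1 + α * k)) ^ k := by
  have hkpos : (0 : ℝ) < k := by exact_mod_cast hk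
  set t : ℝ := α * k with ht
  have htpos : 0 < t := mul_pos hα hkpos
  have h1t : 0 < 1 + t := by linarith
  have hbase : Real.exp (-1 / t) ≤ t / (1 + t) := by
    have h := Real.add_one_le_exp (1 / t)
    have h' : (1 + t) / t ≤ Real.exp (1 / t) := by
      rw [add_div, div_self htpos.ne']; linarith
    have hx : 0 < (1 + t) / t := by positivity
    calc Real.exp (-1 / t) = (Real.exp (1 / t))⁻¹ := by
          rw [← Real.exp_neg]; ring_nf
      _ ≤ ((1 + t) / t)⁻¹ := by
          exact inv_anti₀ hx h'
      _ = t / (1 + t) := by rw [inv_div]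
  have heq : Real.exp (-1 / α) = Real.exp (-1 / t) ^ k := by
    rw [← Real.exp_nat_mul]
    congr 1
    field_simp
    ring
  rw [heq]
  exact pow_le_pow_left₀ (Real.exp_pos _).le hbase k

/-- If `W₁,...,W_k` are i.i.d. nonnegative with `P(W₁ ≤ a) ≤ C a^α` on `[0, a₀]` and
`a* = (1/(C(1+αk)))^{1/α} ≤ a₀`, then `E[min_i W_i] ≥ e^{-1/α} (1/(C(1+αk)))^{1/α}`. -/
theorem min_iid_smallball_lower_bound {Ω : Type*} [MeasurableSpace Ω] (μ : Measure Ω)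
    [IsProbabilityMeasure μ] (k : ℕ) (hk : 1 ≤ k) (C α a₀ : ℝ)
    (hC : 0 < C) (hα : 0 < α) (ha₀ : 0 < a₀)
    (W : Fin k → Ω → ℝ) (hmeas : ∀ i, Measurable (W i))
    (hnn : ∀ i ω, 0 ≤ W i ω)
    (hindep : iIndepFun W μ)
    (hid : ∀ i, μ.map (W i) = μ.map (W ⟨0, hk⟩))
    (hsmall : ∀ a ∈ Set.Icc (0 : ℝ) a₀, (μ {ω | W ⟨0, hk⟩ ω ≤ a}).toReal ≤ C * a ^ α)
    (hastar : (1 / (C * (1 + α * k))) ^ (1 / α) ≤ a₀) :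
    ENNReal.ofReal (Real.exp (-1 / α) * (1 / (C * (1 + α * k))) ^ (1 / α)) ≤
      ∫⁻ ω, ENNReal.ofReal (⨅ i, W i ω) ∂μ := by
  have hkpos : (0 : ℝ) < k := by exact_mod_cast hk
  have h1ak : (0 : ℝ) < 1 + α * k := by positivity
  set x : ℝ := 1 / (C * (1 + α * k)) with hx
  have hxpos : 0 < x := by positivity
  set a : ℝ := x ^ (1 / α) with ha
  have hapos : 0 < a := Real.rpow_pos_of_pos hxpos _
  -- a ^ α = x
  have haα : a ^ α = x := by
    rw [ha, ← Real.rpow_mul hxpos.le, one_div_mul_cancel hα.ne', Real.rpow_one]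
  have hCx : C * a ^ α = 1 / (1 + α * k) := by
    rw [haα, hx]; field_simp
  -- probability that W 0 exceeds a
  have hmem : a ∈ Set.Icc (0 : ℝ) a₀ := ⟨hapos.le, hastar⟩
  have hsmall' := hsmall a hmem
  set q : ℝ := α * k / (1 + α * k) with hq
  have hqpos : 0 < q := by positivity
  have hfac : ∀ i, ENNReal.ofReal q ≤ μ (W i ⁻¹' Set.Ioi a) := by
    intro i
    have hmap : μ (W i ⁻¹' Set.Ioi a) = μ (W ⟨0, hk⟩ ⁻¹' Set.Ioi a) := by
      rw [← Measure.map_apply (hmeas i) measurableSet_Ioi, hid i,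
        Measure.map_apply (hmeas _) measurableSet_Ioi]
    rw [hmap]
    have hcompl : W ⟨0, hk⟩ ⁻¹' Set.Ioi a = {ω | W ⟨0, hk⟩ ω ≤ a}ᶜ := by
      ext ω; simp [not_le]
    have hms : MeasurableSet {ω | W ⟨0, hk⟩ ω ≤ a} :=
      (hmeas _) measurableSet_Iic
    rw [hcompl, prob_compl_eq_one_sub hms]
    have hle : μ {ω | W ⟨0, hk⟩ ω ≤ a} ≤ ENNReal.ofReal (C * a ^ α) := by
      rw [← ENNReal.ofReal_toReal (measure_ne_top μ _)]
      exact ENNReal.ofReal_le_ofReal hsmall'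
    calc ENNReal.ofReal q = 1 - ENNReal.ofReal (C * a ^ α) := by
          rw [hCx, ← ENNReal.ofReal_one, ← ENNReal.ofReal_sub _ (by positivity)]
          congr 1
          rw [hq]; field_simp; ring
      _ ≤ 1 - μ {ω | W ⟨0, hk⟩ ω ≤ a} := tsub_le_tsub_left hle _
  -- independence: measure of the intersection
  have hInter : μ (⋂ i, W i ⁻¹' Set.Ioi a) = ∏ i : Fin k, μ (W i ⁻¹' Set.Ioi a) := by
    have := hindep.measure_inter_preimage_eq_mul Finset.univ
      (sets := fun _ => Set.Ioi a) (fun i _ => measurableSet_Ioi)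
    simpa using this
  have hS : ENNReal.ofReal q ^ k ≤ μ (⋂ i, W i ⁻¹' Set.Ioi a) := by
    rw [hInter]
    calc ENNReal.ofReal q ^ k = ∏ _i : Fin k, ENNReal.ofReal q := by
          rw [Finset.prod_const, Finset.card_univ, Fintype.card_fin]
      _ ≤ ∏ i : Fin k, μ (W i ⁻¹' Set.Ioi a) :=
          Finset.prod_le_prod' (fun i _ => hfac i)
  have hSmeas : MeasurableSet (⋂ i, W i ⁻¹' Set.Ioi a) :=
    MeasurableSet.iInter fun i => (hmeas i) measurableSet_Ioi
  haveI : Nonempty (Fin k) := ⟨⟨0, hk⟩⟩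
  calc ENNReal.ofReal (Real.exp (-1 / α) * x ^ (1 / α))
      ≤ ENNReal.ofReal (a * q ^ k) := by
        apply ENNReal.ofReal_le_ofReal
        rw [← ha, mul_comm a]
        exact mul_le_mul_of_nonneg_right (aux_exp_le α k hα hk) hapos.le
    _ = ENNReal.ofReal a * ENNReal.ofReal q ^ k := by
        rw [ENNReal.ofReal_mul hapos.le, ENNReal.ofReal_pow hqpos.le]
    _ ≤ ENNReal.ofReal a * μ (⋂ i, W i ⁻¹' Set.Ioi a) :=
        mul_le_mul_right hS _
    _ = ∫⁻ _ω in (⋂ i, W i ⁻¹' Set.Ioi a), ENNReal.ofReal a ∂μ := by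
        rw [setLIntegral_const, mul_comm]
    _ ≤ ∫⁻ ω in (⋂ i, W i ⁻¹' Set.Ioi a), ENNReal.ofReal (⨅ i, W i ω) ∂μ := by
        apply setLIntegral_mono' hSmeas
        intro ω hω
        apply ENNReal.ofReal_le_ofReal
        apply le_ciInf
        intro i
        exact (Set.mem_iInter.mp hω i).le
    _ ≤ ∫⁻ ω, ENNReal.ofReal (⨅ i, W i ω) ∂μ := setLIntegral_le_lintegral _ _
end

section
/- Let X be a random element and, conditionally on X, let W₁, ..., W_k be i.i.d. nonnegative random variables. Suppose the averaged small-ball condition P(W₁ ≤ a) ≤ C a^α holds for a ∈ [0, a₀] (the unconditional probability). If a* = (1/(C(1+αk)))^{1/α} ≤ a₀, then E[min_{1≤i≤k} W_i] ≥ e^{-1/α}·(1/(C(1+αk)))^{1/α}. In particular E[min_i W_i] = Ω(k^{-1/α}). -/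
open MeasureTheory ProbabilityTheory

lemma num_ineq {α : ℝ} (hα : 0 < α) {k : ℕ} (hk : 1 ≤ k) :
    Real.exp (-1 / α) ≤ (1 - 1 / (1 + α * k)) ^ k := by
  have hk0 : (0:ℝ) < k := by exact_mod_cast hk
  have hak : 0 < α * k := by positivity
  set t : ℝ := 1 / (α * k) with ht
  have ht0 : 0 < t := by positivity
  have h1 : (1 : ℝ) - 1 / (1 + α * k) = 1 / (1 + t) := by
    rw [ht]; field_simp; ring
  have h2 : Real.exp (-1 / α) = Real.exp (-t) ^ k := by
    rw [← Real.exp_nat_mul]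
    congr 1
    rw [ht]
    field_simp
  rw [h1, h2]
  apply pow_le_pow_left₀ (Real.exp_pos _).le
  rw [Real.exp_neg]
  rw [one_div]
  exact inv_anti₀ (by linarith) (by linarith [Real.add_one_le_exp t])

/-- Theorem 2 (decentralized small-ball converse): if `W₁,...,W_k` are nonnegative and
conditionally i.i.d. given a random element `X`, and the averaged small-ball condition
`P(W₁ ≤ a) ≤ C a^α` holds for `a ∈ [0, a₀]`, and `a* = (1/(C(1+αk)))^{1/α} ≤ a₀`, then
`E[min_i W_i] ≥ e^{-1/α} (1/(C(1+αk)))^{1/α}`. -/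
theorem min_cond_iid_smallball_lower_bound {Ω 𝓧 : Type*} [MeasurableSpace Ω]
    [StandardBorelSpace Ω] [MeasurableSpace 𝓧] (μ : Measure Ω) [IsProbabilityMeasure μ]
    (X : Ω → 𝓧) (hX : Measurable X)
    (k : ℕ) (hk : 1 ≤ k) (C α a₀ : ℝ)
    (hC : 0 < C) (hα : 0 < α) (ha₀ : 0 < a₀)
    (W : Fin k → Ω → ℝ) (hmeas : ∀ i, Measurable (W i))
    (hnn : ∀ i ω, 0 ≤ W i ω)
    (hCindep : iCondIndepFun (MeasurableSpace.comap X inferInstance) hX.comap_le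
      W μ)
    (hCid : ∀ i, ∀ᵐ x ∂(μ.map X), condDistrib (W i) X μ x = condDistrib (W ⟨0, hk⟩) X μ x)
    (hsmall : ∀ a ∈ Set.Icc (0 : ℝ) a₀, (μ {ω | W ⟨0, hk⟩ ω ≤ a}).toReal ≤ C * a ^ α)
    (hastar : (1 / (C * (1 + α * k))) ^ (1 / α) ≤ a₀) :
    ENNReal.ofReal (Real.exp (-1 / α) * (1 / (C * (1 + α * k))) ^ (1 / α)) ≤
      ∫⁻ ω, ENNReal.ofReal (⨅ i, W i ω) ∂μ := by
  haveI : Nonempty (Fin k) := ⟨⟨0, hk⟩⟩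
  set a : ℝ := (1 / (C * (1 + α * k))) ^ (1 / α) with ha_def
  have hk0 : (0:ℝ) < k := by exact_mod_cast hk
  have hden : (0:ℝ) < 1 + α * k := by positivity
  have hbase : (0:ℝ) < 1 / (C * (1 + α * k)) := by positivity
  have ha_pos : 0 < a := Real.rpow_pos_of_pos hbase _
  have haα : C * a ^ α = 1 / (1 + α * k) := by
    rw [ha_def, ← Real.rpow_mul hbase.le, one_div_mul_cancel hα.ne', Real.rpow_one]
    field_simp
  set S : Set Ω := ⋂ i, W i ⁻¹' Set.Ioi a with hS
  have hSmeas : MeasurableSet S := MeasurableSet.iInter fun i => (hmeas i) measurableSet_Ioi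
  -- Step A : ofReal a * μ S ≤ lintegral
  have stepA : ENNReal.ofReal a * μ S ≤ ∫⁻ ω, ENNReal.ofReal (⨅ i, W i ω) ∂μ := by
    rw [← setLIntegral_const S (ENNReal.ofReal a)]
    refine le_trans (setLIntegral_mono' hSmeas fun ω hω => ?_)
      (setLIntegral_le_lintegral _ _)
    refine ENNReal.ofReal_le_ofReal (le_ciInf fun i => ?_)
    exact le_of_lt (Set.mem_iInter.mp hω i)
  -- the p function
  set p : Ω → ℝ := fun ω => (condDistrib (W ⟨0, hk⟩) X μ (X ω) (Set.Ioi a)).toReal with hp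
  have pmeas : Measurable p :=
    ENNReal.measurable_toReal.comp
      ((measurable_condDistrib measurableSet_Ioi).mono hX.comap_le le_rfl)
  have hple : ∀ ω, p ω ≤ 1 := fun ω => by
    rw [hp]
    simpa using ENNReal.toReal_le_of_le_ofReal one_pos.le (by simpa using prob_le_one)
  have hpnn : ∀ ω, 0 ≤ p ω := fun ω => ENNReal.toReal_nonneg
  have hpint : Integrable p μ := by
    refine (integrable_const (1:ℝ)).mono' pmeas.aestronglyMeasurable ?_
    exact Filter.Eventually.of_forall fun ω => by
      rw [Real.norm_eq_abs, abs_of_nonneg (hpnn ω)]; exact hple ω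
  have hpkint : Integrable (fun ω => p ω ^ k) μ := by
    refine (integrable_const (1:ℝ)).mono' (pmeas.pow_const k).aestronglyMeasurable ?_
    exact Filter.Eventually.of_forall fun ω => by
      rw [Real.norm_eq_abs, abs_of_nonneg (pow_nonneg (hpnn ω) k)]
      exact pow_le_one₀ (hpnn ω) (hple ω)
  -- conditional independence + identical distribution : condexp of S is p^k a.e.
  have hcond : ∀ i : Fin k, (μ⟦W i ⁻¹' Set.Ioi a | MeasurableSpace.comap X inferInstance⟧) =ᵐ[μ] p := by
    intro i
    have h1 := (condDistrib_ae_eq_condExp (μ := μ) hX (hmeas i) (measurableSet_Ioi (a := a))).symm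
    have h2 : ∀ᵐ ω ∂μ, condDistrib (W i) X μ (X ω) = condDistrib (W ⟨0, hk⟩) X μ (X ω) :=
      ae_of_ae_map hX.aemeasurable (hCid i)
    refine h1.trans (h2.mono fun ω hω => ?_)
    rw [hp]; simp only; rw [hω]; rfl
  have hprod := (iCondIndepFun_iff_condExp_inter_preimage_eq_mul
    (m' := MeasurableSpace.comap X inferInstance) (hm' := hX.comap_le) (fun _ => inferInstance) W hmeas).mp hCindep
    Finset.univ (sets := fun _ => Set.Ioi a) (fun i _ => measurableSet_Ioi)
  have hSuniv : ⋂ i ∈ Finset.univ, W i ⁻¹' Set.Ioi a = S := by simp [hS]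
  rw [hSuniv] at hprod
  have hSpk : (μ⟦S | MeasurableSpace.comap X inferInstance⟧) =ᵐ[μ] fun ω => p ω ^ k := by
    refine hprod.trans ?_
    have hall : ∀ᵐ ω ∂μ, ∀ i : Fin k, (μ⟦W i ⁻¹' Set.Ioi a | MeasurableSpace.comap X inferInstance⟧) ω = p ω :=
      (ae_all_iff).mpr hcond
    refine hall.mono fun ω hω => ?_
    rw [Finset.prod_apply]
    rw [Finset.prod_congr rfl fun i _ => hω i]
    simp
  -- (μ S).toReal = ∫ p^k
  have hμS : (μ S).toReal = ∫ ω, p ω ^ k ∂μ := by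
    have h1 : ∫ ω, (μ⟦S | MeasurableSpace.comap X inferInstance⟧) ω ∂μ = ∫ ω, S.indicator (fun _ => (1:ℝ)) ω ∂μ :=
      integral_condExp hX.comap_le
    have h2 : ∫ ω, S.indicator (fun _ => (1:ℝ)) ω ∂μ = (μ S).toReal := by
      rw [integral_indicator_const _ hSmeas]; simp; rfl
    rw [← h2, ← h1]
    exact integral_congr_ae hSpk
  -- Jensen
  have hJensen : (∫ ω, p ω ∂μ) ^ k ≤ ∫ ω, p ω ^ k ∂μ := by
    have := (convexOn_pow (𝕜 := ℝ) k).map_integral_le (continuous_pow k).continuousOn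
      isClosed_Ici (Filter.Eventually.of_forall fun ω => hpnn ω) hpint hpkint
    exact this
  -- ∫ p = μ (W₀ > a)
  have hintp : ∫ ω, p ω ∂μ = (μ (W ⟨0, hk⟩ ⁻¹' Set.Ioi a)).toReal := by
    have h1 : ∫ ω, p ω ∂μ = ∫ ω, (μ⟦W ⟨0, hk⟩ ⁻¹' Set.Ioi a | MeasurableSpace.comap X inferInstance⟧) ω ∂μ :=
      integral_congr_ae (condDistrib_ae_eq_condExp hX (hmeas _) measurableSet_Ioi)
    rw [h1, integral_condExp hX.comap_le, integral_indicator_const _ ((hmeas _) measurableSet_Ioi)]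
    simp; rfl
  -- small ball bound
  have hsb : 1 - 1 / (1 + α * k) ≤ ∫ ω, p ω ∂μ := by
    rw [hintp]
    have hcompl : {ω | W ⟨0, hk⟩ ω ≤ a} = (W ⟨0, hk⟩ ⁻¹' Set.Ioi a)ᶜ := by
      ext ω; simp [not_lt]
    have hms : MeasurableSet (W ⟨0, hk⟩ ⁻¹' Set.Ioi a) := (hmeas _) measurableSet_Ioi
    have h1 : (μ (W ⟨0, hk⟩ ⁻¹' Set.Ioi a)).toReal
        = 1 - (μ {ω | W ⟨0, hk⟩ ω ≤ a}).toReal := by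
      rw [hcompl, measure_compl hms (measure_ne_top μ _), measure_univ]
      rw [ENNReal.toReal_sub_of_le prob_le_one (by simp)]
      simp
    rw [h1]
    have := hsmall a ⟨ha_pos.le, hastar⟩
    linarith [haα ▸ this]
  -- step B : ofReal (exp (-1/α)) ≤ μ S
  have stepB : ENNReal.ofReal (Real.exp (-1 / α)) ≤ μ S := by
    have h1 : Real.exp (-1 / α) ≤ (μ S).toReal := by
      rw [hμS]
      refine le_trans (le_trans (num_ineq hα hk) ?_) hJensen
      refine pow_le_pow_left₀ (by rw [sub_nonneg, div_le_one hden]; nlinarith [mul_pos hα hk0]) hsb k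
    calc ENNReal.ofReal (Real.exp (-1 / α)) ≤ ENNReal.ofReal ((μ S).toReal) :=
          ENNReal.ofReal_le_ofReal h1
      _ = μ S := ENNReal.ofReal_toReal (measure_ne_top μ S)
  calc ENNReal.ofReal (Real.exp (-1 / α) * a)
      = ENNReal.ofReal a * ENNReal.ofReal (Real.exp (-1 / α)) := by
        rw [← ENNReal.ofReal_mul ha_pos.le, mul_comm]
    _ ≤ ENNReal.ofReal a * μ S := mul_le_mul_right stepB _
    _ ≤ _ := stepA
end

section
/- If Z is a real-valued random variable (conditionally on any event) with density bounded by M = (2πσ_G²)^{-1/2} everywhere, then for all a ≥ 0, P(Z² ≤ a) ≤ 2M·√a, and consequently for i.i.d. copies W_i = Z_i², E[min_{1≤i≤k} W_i] ≥ e^{-2}·(1/(2M(1+k/2)))² = 2πσ_G²/(e²(k+2)²). -/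
open MeasureTheory ProbabilityTheory Real

/-- If `Z₁,...,Z_k` are i.i.d. real random variables each with a density bounded by
`M = (2πσ_G²)^{-1/2}`, then `P(Z_i² ≤ a) ≤ 2M√a` for all `a ≥ 0`, and for `W_i = Z_i²`,
`E[min_i W_i] ≥ e^{-2}(1/(2M(1+k/2)))² = 2πσ_G²/(e²(k+2)²)`. -/
theorem scalar_gaussian_benchmark_lower_bound {Ω : Type*} [MeasurableSpace Ω]
    (μ : Measure Ω) [IsProbabilityMeasure μ]
    (k : ℕ) (hk : 1 ≤ k) (σG : ℝ) (hσ : 0 < σG)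
    (M : ℝ) (hM : M = (2 * π * σG ^ 2) ^ (-(1 : ℝ) / 2))
    (Z : Fin k → Ω → ℝ) (hmeas : ∀ i, Measurable (Z i))
    (hindep : iIndepFun Z μ)
    (hid : ∀ i, μ.map (Z i) = μ.map (Z ⟨0, hk⟩))
    (f : Fin k → ℝ → ℝ) (hfnn : ∀ i x, 0 ≤ f i x)
    (hdens : ∀ i, μ.map (Z i) = volume.withDensity fun x => ENNReal.ofReal (f i x))
    (hbd : ∀ i x, f i x ≤ M) :
    (∀ i, ∀ a : ℝ, 0 ≤ a → (μ {ω | (Z i ω) ^ 2 ≤ a}).toReal ≤ 2 * M * Real.sqrt a) ∧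
    Real.exp (-2) * (1 / (2 * M * (1 + (k : ℝ) / 2))) ^ 2
      = 2 * π * σG ^ 2 / (Real.exp 2 * ((k : ℝ) + 2) ^ 2) ∧
    ENNReal.ofReal (2 * π * σG ^ 2 / (Real.exp 2 * ((k : ℝ) + 2) ^ 2)) ≤
      ∫⁻ ω, ENNReal.ofReal (⨅ i, (Z i ω) ^ 2) ∂μ := by
  have hA : (0 : ℝ) < 2 * π * σG ^ 2 := by positivity
  have hMpos : 0 < M := hM ▸ Real.rpow_pos_of_pos hA _
  have hM2 : M ^ 2 = (2 * π * σG ^ 2)⁻¹ := by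
    rw [hM, ← Real.rpow_natCast _ 2, ← Real.rpow_mul hA.le]
    norm_num [Real.rpow_neg_one]
  have hkR : (0 : ℝ) < (k : ℝ) := by exact_mod_cast hk
  -- Key ENNReal small-ball bound
  have key : ∀ i, ∀ a : ℝ, 0 ≤ a →
      μ {ω | (Z i ω) ^ 2 ≤ a} ≤ ENNReal.ofReal (2 * M * Real.sqrt a) := by
    intro i a ha
    have hset : {x : ℝ | x ^ 2 ≤ a} = Set.Icc (-Real.sqrt a) (Real.sqrt a) := by
      ext x
      constructor
      · intro h
        have := Real.sqrt_le_sqrt h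
        rw [Real.sqrt_sq_eq_abs] at this
        exact abs_le.mp this
      · rintro ⟨h1, h2⟩
        calc x ^ 2 ≤ (Real.sqrt a) ^ 2 := sq_le_sq' h1 h2
          _ = a := Real.sq_sqrt ha
    have hpre : {ω | (Z i ω) ^ 2 ≤ a} = Z i ⁻¹' {x | x ^ 2 ≤ a} := rfl
    rw [hpre, hset, ← Measure.map_apply (hmeas i) measurableSet_Icc, hdens i,
      withDensity_apply _ measurableSet_Icc]
    calc ∫⁻ x in Set.Icc (-Real.sqrt a) (Real.sqrt a), ENNReal.ofReal (f i x)
        ≤ ∫⁻ _ in Set.Icc (-Real.sqrt a) (Real.sqrt a), ENNReal.ofReal M :=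
          lintegral_mono fun x => ENNReal.ofReal_le_ofReal (hbd i x)
      _ = ENNReal.ofReal M * volume (Set.Icc (-Real.sqrt a) (Real.sqrt a)) :=
          setLIntegral_const _ _
      _ = ENNReal.ofReal M * ENNReal.ofReal (Real.sqrt a - -Real.sqrt a) := by
          rw [Real.volume_Icc]
      _ = ENNReal.ofReal (2 * M * Real.sqrt a) := by
          rw [← ENNReal.ofReal_mul hMpos.le]
          congr 1
          ring
  refine ⟨fun i a ha => ENNReal.toReal_le_of_le_ofReal (by positivity) (key i a ha), ?_, ?_⟩
  · have hA' : 2 * π * σG ^ 2 = (M ^ 2)⁻¹ := by rw [hM2, inv_inv]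
    rw [hA', Real.exp_neg]
    have h1 : (1 : ℝ) + (k : ℝ) / 2 ≠ 0 := by positivity
    have h2 : Real.exp 2 ≠ 0 := (Real.exp_pos 2).ne'
    field_simp
    ring
  · set t : ℝ := 2 * π * σG ^ 2 / ((k : ℝ) + 2) ^ 2 with ht_def
    have htpos : 0 < t := by positivity
    have h2Mt : 2 * M * Real.sqrt t = 2 / ((k : ℝ) + 2) := by
      have hsq : Real.sqrt t = Real.sqrt (2 * π * σG ^ 2) / ((k : ℝ) + 2) := by
        rw [ht_def, Real.sqrt_div hA.le, Real.sqrt_sq (by positivity)]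
      have hMs : M * Real.sqrt (2 * π * σG ^ 2) = 1 := by
        rw [hM, Real.sqrt_eq_rpow, ← Real.rpow_add hA]
        norm_num
      rw [hsq]
      calc 2 * M * (Real.sqrt (2 * π * σG ^ 2) / ((k : ℝ) + 2))
          = 2 * (M * Real.sqrt (2 * π * σG ^ 2)) / ((k : ℝ) + 2) := by ring
        _ = 2 / ((k : ℝ) + 2) := by rw [hMs, mul_one]
    set B : Set ℝ := {x : ℝ | x ^ 2 ≤ t} with hB_def
    have hB : MeasurableSet B := measurableSet_le (by measurability) measurable_const
    set S : Set Ω := ⋂ i, Z i ⁻¹' Bᶜ with hS_def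
    have hSmeas : MeasurableSet S :=
      MeasurableSet.iInter fun i => (hmeas i) hB.compl
    have hprod : μ S = ∏ i, μ (Z i ⁻¹' Bᶜ) :=
      hindep.meas_iInter fun i => ⟨Bᶜ, hB.compl, rfl⟩
    have hfrac : (0 : ℝ) ≤ (k : ℝ) / ((k : ℝ) + 2) := by positivity
    have hfac : ∀ i, ENNReal.ofReal ((k : ℝ) / ((k : ℝ) + 2)) ≤ μ (Z i ⁻¹' Bᶜ) := by
      intro i
      have hc : μ (Z i ⁻¹' Bᶜ) = 1 - μ (Z i ⁻¹' B) := by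
        rw [Set.preimage_compl]
        exact prob_compl_eq_one_sub ((hmeas i) hB)
      have hle : μ (Z i ⁻¹' B) ≤ ENNReal.ofReal (2 / ((k : ℝ) + 2)) := by
        have := key i t htpos.le
        rwa [h2Mt] at this
      have heq : (k : ℝ) / ((k : ℝ) + 2) = 1 - 2 / ((k : ℝ) + 2) := by
        field_simp
        ring
      rw [hc, heq, ENNReal.ofReal_sub _ (by positivity), ENNReal.ofReal_one]
      exact tsub_le_tsub_left hle 1
    have hexp : Real.exp (-2) ≤ ((k : ℝ) / ((k : ℝ) + 2)) ^ k := by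
      have h1 : Real.exp (-(2 / (k : ℝ))) ≤ (k : ℝ) / ((k : ℝ) + 2) := by
        have h2 : (1 : ℝ) + 2 / (k : ℝ) ≤ Real.exp (2 / (k : ℝ)) := by
          have := Real.add_one_le_exp (2 / (k : ℝ)); linarith
        have h3 : ((k : ℝ) + 2) / (k : ℝ) = 1 + 2 / (k : ℝ) := by field_simp
        rw [Real.exp_neg]
        calc (Real.exp (2 / (k : ℝ)))⁻¹ ≤ (((k : ℝ) + 2) / (k : ℝ))⁻¹ := by
              apply inv_anti₀ (by positivity)
              rw [h3]; exact h2
          _ = (k : ℝ) / ((k : ℝ) + 2) := by rw [inv_div]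
      calc Real.exp (-2) = Real.exp (-(2 / (k : ℝ))) ^ k := by
            rw [← Real.exp_nat_mul]
            congr 1
            field_simp
        _ ≤ ((k : ℝ) / ((k : ℝ) + 2)) ^ k :=
            pow_le_pow_left₀ (Real.exp_nonneg _) h1 k
    have hS : ENNReal.ofReal (Real.exp (-2)) ≤ μ S := by
      calc ENNReal.ofReal (Real.exp (-2))
          ≤ ENNReal.ofReal (((k : ℝ) / ((k : ℝ) + 2)) ^ k) := ENNReal.ofReal_le_ofReal hexp
        _ = (ENNReal.ofReal ((k : ℝ) / ((k : ℝ) + 2))) ^ k := ENNReal.ofReal_pow hfrac k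
        _ = ∏ _i : Fin k, ENNReal.ofReal ((k : ℝ) / ((k : ℝ) + 2)) := by
            simp [Finset.prod_const]
        _ ≤ ∏ i, μ (Z i ⁻¹' Bᶜ) := Finset.prod_le_prod' fun i _ => hfac i
        _ = μ S := hprod.symm
    calc ENNReal.ofReal (2 * π * σG ^ 2 / (Real.exp 2 * ((k : ℝ) + 2) ^ 2))
        = ENNReal.ofReal (Real.exp (-2)) * ENNReal.ofReal t := by
          rw [← ENNReal.ofReal_mul (Real.exp_nonneg _)]
          congr 1
          rw [ht_def, Real.exp_neg]
          field_simp
      _ ≤ μ S * ENNReal.ofReal t := mul_le_mul_left hS _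
      _ = ∫⁻ ω, S.indicator (fun _ => ENNReal.ofReal t) ω ∂μ := by
          rw [lintegral_indicator hSmeas _, setLIntegral_const, mul_comm]
      _ ≤ ∫⁻ ω, ENNReal.ofReal (⨅ i, (Z i ω) ^ 2) ∂μ := by
          apply lintegral_mono
          intro ω
          haveI : Nonempty (Fin k) := ⟨⟨0, hk⟩⟩
          by_cases hω : ω ∈ S
          · rw [Set.indicator_of_mem hω]
            apply ENNReal.ofReal_le_ofReal
            apply le_ciInf
            intro i
            have := Set.mem_iInter.mp hω i
            simp only [Set.mem_preimage, Set.mem_compl_iff, hB_def, Set.mem_setOf_eq,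
              not_le] at this
            exact this.le
          · rw [Set.indicator_of_notMem hω]
            exact zero_le
end
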